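/- Let A be a Dedekind domain with fraction field K, ν the natural divisor valuation on K* into the group of fractional ideals (sending x to the ideal Ax, ordered by reverse inclusion), and w the Gauss extension of ν to K(X) defined via contents of polynomials. Then the Kronecker function ring R(w) = {r/s ∈ K(X) : c(r) ⊆ c(s)} ∪ {0} is a principal ideal domain. -/

import Mathlib

/-- The content of a polynomial p ∈ K[X]: the fractional ideal of A generated by the
coefficients of p. -/
noncomputable def polyContent (A : Type*) [CommRing A] {K : Type*} [Field K]
    [Algebra A K] [IsFractionRing A K] (p : Polynomial K) :
    FractionalIdeal (nonZeroDivisors A) K :=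
  FractionalIdeal.spanFinset A p.support (fun n => p.coeff n)


open UniqueFactorizationMonoid Polynomial

section Mu
variable {A : Type*} [CommRing A] [IsDedekindDomain A]

open scoped Classical in
/-- ℕ∞-valued multiplicity of the prime `P` in the ideal `I`. -/
noncomputable def muCount (P : Ideal A) (I : Ideal A) : ℕ∞ :=
  if I = ⊥ then ⊤ else (Multiset.count P (normalizedFactors I) : ℕ∞)

lemma muCount_bot (P : Ideal A) : muCount P (⊥ : Ideal A) = ⊤ := by simp [muCount]

lemma muCount_ne_top {P I : Ideal A} (hI : I ≠ ⊥) : muCount P I ≠ ⊤ := by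
  simp [muCount, hI]

lemma muCount_eq_top_iff {P I : Ideal A} : muCount P I = ⊤ ↔ I = ⊥ := by
  by_cases hI : I = ⊥ <;> simp [muCount, hI]

lemma muCount_mul (P I J : Ideal A) : muCount P (I * J) = muCount P I + muCount P J := by
  classical
  by_cases hI : I = ⊥
  · simp [hI, muCount]
  by_cases hJ : J = ⊥
  · simp [hJ, muCount]
  have hIJ : I * J ≠ ⊥ := mul_ne_zero hI hJ
  simp only [muCount, if_neg hI, if_neg hJ, if_neg hIJ]
  rw [normalizedFactors_mul hI hJ, Multiset.count_add]
  push_cast; ring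

lemma muCount_antitone (P : Ideal A) {I J : Ideal A} (h : I ≤ J) :
    muCount P J ≤ muCount P I := by
  classical
  by_cases hI : I = ⊥
  · simp [hI, muCount]
  have hJ : J ≠ ⊥ := fun hJ => hI (le_bot_iff.mp (hJ ▸ h))
  simp only [muCount, if_neg hI, if_neg hJ]
  exact_mod_cast count_le_of_ideal_ge h hI P

lemma muCount_sup (P I J : Ideal A) : muCount P (I ⊔ J) = min (muCount P I) (muCount P J) := by
  classical
  by_cases hI : I = ⊥
  · simp [hI, muCount_bot]
  by_cases hJ : J = ⊥
  · simp [hJ, muCount_bot]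
  have hIJ : I ⊔ J ≠ ⊥ := by
    simp [sup_eq_bot_iff, hI]
  simp only [muCount, if_neg hI, if_neg hJ, if_neg hIJ]
  rw [sup_eq_prod_inf_factors hI hJ]
  have H : normalizedFactors ((normalizedFactors I ∩ normalizedFactors J).prod) =
      normalizedFactors I ∩ normalizedFactors J := by
    apply normalizedFactors_prod_of_prime
    intro p hp
    exact prime_of_normalized_factor p (Multiset.mem_inter.1 hp).1
  rw [H, Multiset.count_inter]
  rfl

lemma eq_of_muCount {I J : Ideal A} (h : ∀ P, muCount P I = muCount P J) : I = J := by
  classical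
  by_cases hI : I = ⊥
  · by_cases hJ : J = ⊥
    · rw [hI, hJ]
    · exfalso
      have := h ⊥
      rw [hI, muCount_bot] at this
      exact muCount_ne_top hJ this.symm
  · by_cases hJ : J = ⊥
    · exfalso
      have := h ⊥
      rw [hJ, muCount_bot] at this
      exact muCount_ne_top hI this
    · have hfac : normalizedFactors I = normalizedFactors J := by
        ext P
        have := h P
        simp only [muCount, if_neg hI, if_neg hJ, Nat.cast_inj] at this
        exact this
      rw [← prod_normalizedFactors_eq_self hI, ← prod_normalizedFactors_eq_self hJ, hfac]

/-- ℕ∞-valued multiplicity of `P` in the principal ideal `(x)`. -/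
noncomputable def nuCount (P : Ideal A) (x : A) : ℕ∞ := muCount P (Ideal.span {x})

lemma nuCount_eq_top_iff {P : Ideal A} {x : A} : nuCount P x = ⊤ ↔ x = 0 := by
  rw [nuCount, muCount_eq_top_iff, Ideal.span_singleton_eq_bot]

lemma nuCount_zero (P : Ideal A) : nuCount P (0 : A) = ⊤ := by
  rw [nuCount_eq_top_iff]

lemma nuCount_mul (P : Ideal A) (x y : A) :
    nuCount P (x * y) = nuCount P x + nuCount P y := by
  rw [nuCount, ← Ideal.span_singleton_mul_span_singleton, muCount_mul]; rfl

lemma min_le_nuCount_add (P : Ideal A) (x y : A) :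
    min (nuCount P x) (nuCount P y) ≤ nuCount P (x + y) := by
  unfold nuCount
  rw [← muCount_sup]
  apply muCount_antitone
  rw [Ideal.span_le]
  intro z hz
  rw [Set.mem_singleton_iff] at hz
  subst hz
  exact Submodule.add_mem _ (Ideal.mem_sup_left (Ideal.subset_span rfl))
    (Ideal.mem_sup_right (Ideal.subset_span rfl))

lemma nuCount_neg (P : Ideal A) (x : A) : nuCount P (-x) = nuCount P x := by
  unfold nuCount
  rw [Ideal.span_singleton_neg]

lemma nuCount_add_eq_left {P : Ideal A} {x y : A} (h : nuCount P x < nuCount P y) :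
    nuCount P (x + y) = nuCount P x := by
  apply le_antisymm
  · have h2 := min_le_nuCount_add P (x + y) (-y)
    rw [add_neg_cancel_right, nuCount_neg] at h2
    rcases min_le_iff.mp h2 with h3 | h3
    · exact h3
    · exact absurd h3 (not_le.mpr h)
  · calc nuCount P x = min (nuCount P x) (nuCount P y) := (min_eq_left h.le).symm
      _ ≤ _ := min_le_nuCount_add P x y

lemma le_nuCount_sum {P : Ideal A} {ι : Type*} (s : Finset ι) (f : ι → A) {c : ℕ∞}
    (h : ∀ i ∈ s, c ≤ nuCount P (f i)) : c ≤ nuCount P (∑ i ∈ s, f i) := by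
  classical
  induction s using Finset.induction_on with
  | empty => simp [nuCount_zero]
  | @insert a s' hx ih =>
    rw [Finset.sum_insert hx]
    calc c ≤ min (nuCount P (f a)) (nuCount P (∑ i ∈ s', f i)) :=
          le_min (h a (Finset.mem_insert_self a s')) (ih fun i hi => h i (Finset.mem_insert_of_mem hi))
      _ ≤ _ := min_le_nuCount_add P _ _

end Mu
section ContA
variable {A : Type*} [CommRing A] [IsDedekindDomain A]

/-- Content ideal of a polynomial over `A`. -/
noncomputable def contIdeal (F : Polynomial A) : Ideal A := Ideal.span (Set.range F.coeff)

lemma contIdeal_eq_sup (F : Polynomial A) :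
    contIdeal F = (Finset.range (F.natDegree + 1)).sup (fun i => Ideal.span {F.coeff i}) := by
  apply le_antisymm
  · rw [contIdeal, Ideal.span_le]
    rintro x ⟨i, rfl⟩
    by_cases hi : i ≤ F.natDegree
    · exact SetLike.le_def.mp (Finset.le_sup (f := fun i => Ideal.span {F.coeff i})
        (Finset.mem_range.mpr (Nat.lt_succ_of_le hi))) (Ideal.subset_span rfl)
    · rw [Polynomial.coeff_eq_zero_of_natDegree_lt (not_le.mp hi)]
      exact Submodule.zero_mem _
  · apply Finset.sup_le
    intro i _
    rw [Ideal.span_le]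
    rintro x hx
    rw [Set.mem_singleton_iff] at hx
    subst hx
    exact Ideal.subset_span ⟨i, rfl⟩

lemma muCount_finsetSup (P : Ideal A) {ι : Type*} (s : Finset ι) (f : ι → Ideal A) :
    muCount P (s.sup f) = s.inf (fun i => muCount P (f i)) := by
  classical
  induction s using Finset.induction_on with
  | empty => simp [muCount_bot]
  | @insert a s' hx ih =>
    rw [Finset.sup_insert, Finset.inf_insert, muCount_sup, ih]

lemma muCount_contIdeal (P : Ideal A) (F : Polynomial A) :
    muCount P (contIdeal F) = ⨅ i : ℕ, nuCount P (F.coeff i) := by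
  rw [contIdeal_eq_sup, muCount_finsetSup]
  apply le_antisymm
  · apply le_iInf
    intro i
    by_cases hi : i ∈ Finset.range (F.natDegree + 1)
    · exact Finset.inf_le hi
    · rw [Polynomial.coeff_eq_zero_of_natDegree_lt
        (not_le.mp (fun h => hi (Finset.mem_range.mpr (Nat.lt_succ_of_le h)))), nuCount_zero]
      exact le_top
  · apply Finset.le_inf
    intro i _
    exact iInf_le _ i

lemma contIdeal_ne_bot {F : Polynomial A} (hF : F ≠ 0) : contIdeal F ≠ ⊥ := by
  intro h
  apply hF
  ext i : 1
  have : F.coeff i ∈ contIdeal F := Ideal.subset_span ⟨i, rfl⟩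
  rw [h, Ideal.mem_bot] at this
  simp [this]

/-- **Gauss's lemma / Dedekind's content formula** over a Dedekind domain. -/
theorem contIdeal_mul {F G : Polynomial A} (hF : F ≠ 0) (hG : G ≠ 0) :
    contIdeal (F * G) = contIdeal F * contIdeal G := by
  classical
  apply eq_of_muCount
  intro P
  rw [muCount_mul, muCount_contIdeal, muCount_contIdeal, muCount_contIdeal]
  set Amin := ⨅ i : ℕ, nuCount P (F.coeff i) with hAmin
  set Bmin := ⨅ i : ℕ, nuCount P (G.coeff i) with hBmin
  have hAtop : Amin ≠ ⊤ := by
    intro h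
    have : nuCount P (F.coeff F.natDegree) = ⊤ :=
      top_le_iff.mp (h ▸ iInf_le _ F.natDegree)
    exact Polynomial.leadingCoeff_ne_zero.mpr hF (nuCount_eq_top_iff.mp this)
  have hBtop : Bmin ≠ ⊤ := by
    intro h
    have : nuCount P (G.coeff G.natDegree) = ⊤ :=
      top_le_iff.mp (h ▸ iInf_le _ G.natDegree)
    exact Polynomial.leadingCoeff_ne_zero.mpr hG (nuCount_eq_top_iff.mp this)
  -- lower bound : each coefficient of F * G has nu ≥ Amin + Bmin
  have hge : ∀ k : ℕ, Amin + Bmin ≤ nuCount P ((F * G).coeff k) := by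
    intro k
    rw [Polynomial.coeff_mul]
    apply le_nuCount_sum
    rintro ⟨i, j⟩ _
    rw [nuCount_mul]
    exact add_le_add (iInf_le _ i) (iInf_le _ j)
  -- existence of minimal indices
  have hexmin : ∀ (H : Polynomial A), ∃ i, nuCount P (H.coeff i) ≤ ⨅ j : ℕ, nuCount P (H.coeff j) := by
    intro H
    obtain ⟨v, ⟨i, rfl⟩, hminv⟩ := (wellFounded_lt (α := ℕ∞)).has_min
      (Set.range (fun i => nuCount P (H.coeff i))) ⟨_, ⟨0, rfl⟩⟩
    exact ⟨i, le_iInf fun j => not_lt.mp (hminv _ ⟨j, rfl⟩)⟩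
  have hexA := hexmin F
  have hexB := hexmin G
  classical
  set i₀ := Nat.find hexA with hi₀
  set j₀ := Nat.find hexB with hj₀
  have hFi₀ : nuCount P (F.coeff i₀) = Amin :=
    le_antisymm (Nat.find_spec hexA) (iInf_le _ i₀)
  have hGj₀ : nuCount P (G.coeff j₀) = Bmin :=
    le_antisymm (Nat.find_spec hexB) (iInf_le _ j₀)
  have hFlt : ∀ i < i₀, Amin < nuCount P (F.coeff i) := by
    intro i hi
    exact lt_of_not_ge (Nat.find_min hexA hi)
  have hGlt : ∀ j < j₀, Bmin < nuCount P (G.coeff j) := by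
    intro j hj
    exact lt_of_not_ge (Nat.find_min hexB hj)
  -- the key coefficient
  have hkey : nuCount P ((F * G).coeff (i₀ + j₀)) = Amin + Bmin := by
    rw [Polynomial.coeff_mul]
    have hmem : ((i₀, j₀) : ℕ × ℕ) ∈ Finset.HasAntidiagonal.antidiagonal (i₀ + j₀) := by
      simp [Finset.HasAntidiagonal.mem_antidiagonal]
    rw [← Finset.add_sum_erase _ _ hmem]
    have hrest : Amin + Bmin <
        nuCount P (∑ x ∈ (Finset.HasAntidiagonal.antidiagonal (i₀ + j₀)).erase (i₀, j₀), F.coeff x.1 * G.coeff x.2) := by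
      rw [← ENat.add_one_le_iff (m := Amin + Bmin) (fun h => (WithTop.add_eq_top.mp h).elim hAtop hBtop)]
      apply le_nuCount_sum
      rintro ⟨i, j⟩ hij
      rw [Finset.mem_erase, Finset.HasAntidiagonal.mem_antidiagonal] at hij
      obtain ⟨hne, hsum⟩ := hij
      rw [nuCount_mul]
      rcases lt_or_ge i i₀ with hlt | hge
      · calc Amin + Bmin + 1 = (Amin + 1) + Bmin := by ring
          _ ≤ nuCount P (F.coeff i) + nuCount P (G.coeff j) :=
            add_le_add (ENat.add_one_le_iff hAtop |>.mpr (hFlt i hlt)) (iInf_le _ j)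
      · have hj : j < j₀ := by
          rcases lt_or_eq_of_le hge with h | h
          · omega
          · exfalso; apply hne; subst h; simp at hsum ⊢; omega
        calc Amin + Bmin + 1 = Amin + (Bmin + 1) := by ring
          _ ≤ nuCount P (F.coeff i) + nuCount P (G.coeff j) :=
            add_le_add (iInf_le _ i) (ENat.add_one_le_iff hBtop |>.mpr (hGlt j hj))
    rw [nuCount_add_eq_left (by rw [nuCount_mul, hFi₀, hGj₀]; exact hrest)]
    rw [nuCount_mul, hFi₀, hGj₀]
  apply le_antisymm
  · exact le_trans (iInf_le _ (i₀ + j₀)) (le_of_eq hkey)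
  · exact le_iInf hge

end ContA
section ContK
variable {A : Type*} [CommRing A] [IsDedekindDomain A] {K : Type*} [Field K]
    [Algebra A K] [IsFractionRing A K]

lemma polyContent_coe (p : Polynomial K) :
    (polyContent A p : Submodule A K) = Submodule.span A (Set.range p.coeff) := by
  rw [polyContent, FractionalIdeal.spanFinset_coe]
  apply le_antisymm
  · apply Submodule.span_mono
    rintro x ⟨i, _, rfl⟩
    exact ⟨i, rfl⟩
  · rw [Submodule.span_le]
    rintro x ⟨i, rfl⟩
    by_cases hi : i ∈ p.support
    · exact Submodule.subset_span ⟨i, hi, rfl⟩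
    · rw [Polynomial.notMem_support_iff.mp hi]
      exact Submodule.zero_mem _

lemma polyContent_eq_zero_iff {p : Polynomial K} : polyContent A p = 0 ↔ p = 0 := by
  rw [polyContent, FractionalIdeal.spanFinset_eq_zero]
  constructor
  · intro h
    ext i : 1
    by_cases hi : i ∈ p.support
    · simpa using h i hi
    · simpa using Polynomial.notMem_support_iff.mp hi
  · rintro rfl
    simp

lemma polyContent_ne_zero {p : Polynomial K} (hp : p ≠ 0) : polyContent A p ≠ 0 :=
  fun h => hp (polyContent_eq_zero_iff.mp h)

lemma polyContent_map (F : Polynomial A) :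
    polyContent A (F.map (algebraMap A K)) = (contIdeal F : FractionalIdeal (nonZeroDivisors A) K) := by
  apply FractionalIdeal.coeToSubmodule_injective
  dsimp only
  rw [polyContent_coe, FractionalIdeal.coe_coeIdeal, contIdeal, IsLocalization.coeSubmodule_span]
  congr 1
  ext x
  constructor
  · rintro ⟨i, rfl⟩
    exact ⟨F.coeff i, ⟨i, rfl⟩, (Polynomial.coeff_map _ _).symm⟩
  · rintro ⟨y, ⟨i, rfl⟩, rfl⟩
    exact ⟨i, Polynomial.coeff_map _ _⟩

lemma polyContent_smul (b : A) (p : Polynomial K) :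
    polyContent A (b • p) =
      FractionalIdeal.spanSingleton (nonZeroDivisors A) (algebraMap A K b) * polyContent A p := by
  apply FractionalIdeal.coeToSubmodule_injective
  dsimp only
  rw [FractionalIdeal.coe_mul, FractionalIdeal.coe_spanSingleton, polyContent_coe, polyContent_coe,
    Submodule.span_singleton_mul, Submodule.smul_span]
  congr 1
  ext x
  constructor
  · rintro ⟨i, rfl⟩
    refine ⟨p.coeff i, ⟨i, rfl⟩, ?_⟩
    simp [Polynomial.coeff_smul, Algebra.smul_def]
  · rintro ⟨y, ⟨i, rfl⟩, rfl⟩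
    refine ⟨i, ?_⟩
    simp [Polynomial.coeff_smul, Algebra.smul_def]

lemma spanSingleton_cancel {x : K} (hx : x ≠ 0)
    {I J : FractionalIdeal (nonZeroDivisors A) K}
    (h : FractionalIdeal.spanSingleton (nonZeroDivisors A) x * I =
      FractionalIdeal.spanSingleton (nonZeroDivisors A) x * J) : I = J := by
  have h2 := congrArg (fun M => FractionalIdeal.spanSingleton (nonZeroDivisors A) x⁻¹ * M) h
  simp only [← mul_assoc, FractionalIdeal.spanSingleton_mul_spanSingleton,
    inv_mul_cancel₀ hx, FractionalIdeal.spanSingleton_one, one_mul] at h2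
  exact h2

theorem polyContent_mul (p q : Polynomial K) :
    polyContent A (p * q) = polyContent A p * polyContent A q := by
  by_cases hp : p = 0
  · subst hp; simp [polyContent_eq_zero_iff.mpr rfl]
  by_cases hq : q = 0
  · subst hq; simp [polyContent_eq_zero_iff.mpr rfl]
  obtain ⟨bp, hbp⟩ := IsLocalization.integerNormalization_map_to_map (nonZeroDivisors A) p
  obtain ⟨bq, hbq⟩ := IsLocalization.integerNormalization_map_to_map (nonZeroDivisors A) q
  set Np := IsLocalization.integerNormalization (nonZeroDivisors A) p
  set Nq := IsLocalization.integerNormalization (nonZeroDivisors A) q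
  have hbp0 : algebraMap A K (bp : A) ≠ 0 :=
    IsFractionRing.to_map_ne_zero_of_mem_nonZeroDivisors bp.2
  have hbq0 : algebraMap A K (bq : A) ≠ 0 :=
    IsFractionRing.to_map_ne_zero_of_mem_nonZeroDivisors bq.2
  have hNp : Np ≠ 0 := by
    intro h
    apply hp
    have := hbp
    rw [h, Polynomial.map_zero] at this
    have h2 : ∀ n, (bp : A) • p.coeff n = 0 := by
      intro n
      have := congrArg (fun r => Polynomial.coeff r n) this
      simpa [Polynomial.coeff_smul] using this.symm
    ext n
    have h3 := h2 n
    rw [Algebra.smul_def, mul_eq_zero] at h3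
    rcases h3 with h3 | h3
    · exact absurd h3 hbp0
    · simp [h3]
  have hNq : Nq ≠ 0 := by
    intro h
    apply hq
    have := hbq
    rw [h, Polynomial.map_zero] at this
    have h2 : ∀ n, (bq : A) • q.coeff n = 0 := by
      intro n
      have := congrArg (fun r => Polynomial.coeff r n) this
      simpa [Polynomial.coeff_smul] using this.symm
    ext n
    have h3 := h2 n
    rw [Algebra.smul_def, mul_eq_zero] at h3
    rcases h3 with h3 | h3
    · exact absurd h3 hbq0
    · simp [h3]
  have hmap : (Np * Nq).map (algebraMap A K) = ((bp : A) * (bq : A)) • (p * q) := by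
    rw [Polynomial.map_mul, hbp, hbq, mul_smul]
    rw [smul_mul_assoc, mul_smul_comm]
  have key : polyContent A (((bp : A) * (bq : A)) • (p * q)) =
      (contIdeal (Np * Nq) : FractionalIdeal (nonZeroDivisors A) K) := by
    rw [← hmap, polyContent_map]
  rw [contIdeal_mul hNp hNq, FractionalIdeal.coeIdeal_mul, ← polyContent_map, ← polyContent_map,
    hbp, hbq, polyContent_smul, polyContent_smul, polyContent_smul, map_mul] at key
  apply spanSingleton_cancel (mul_ne_zero hbp0 hbq0)
  rw [key, ← FractionalIdeal.spanSingleton_mul_spanSingleton]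
  ring

end ContK
section Main
variable {A : Type*} [CommRing A] [IsDedekindDomain A] {K : Type*} [Field K]
    [Algebra A K] [IsFractionRing A K]

lemma polyContent_X_pow (n : ℕ) : polyContent A ((Polynomial.X : Polynomial K) ^ n) = 1 := by
  apply FractionalIdeal.coeToSubmodule_injective
  dsimp only
  rw [polyContent_coe, FractionalIdeal.coe_one, Submodule.one_eq_span]
  apply le_antisymm
  · rw [Submodule.span_le]
    rintro x ⟨i, rfl⟩
    rw [Polynomial.coeff_X_pow]
    by_cases h : i = n
    · simp only [h, if_pos rfl]
      exact Submodule.subset_span rfl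
    · simp only [if_neg h]
      exact Submodule.zero_mem _
  · rw [Submodule.span_le]
    rintro x hx
    rw [Set.mem_singleton_iff] at hx
    subst hx
    exact Submodule.subset_span ⟨n, by simp [Polynomial.coeff_X_pow]⟩

lemma polyContent_add_mul_X_pow (f g : Polynomial K) {n : ℕ} (hn : f.natDegree < n) :
    polyContent A (f + g * Polynomial.X ^ n) = polyContent A f ⊔ polyContent A g := by
  apply FractionalIdeal.coeToSubmodule_injective
  dsimp only
  rw [FractionalIdeal.coe_sup, polyContent_coe, polyContent_coe, polyContent_coe]
  apply le_antisymm
  · rw [Submodule.span_le]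
    rintro x ⟨i, rfl⟩
    rw [Polynomial.coeff_add, Polynomial.coeff_mul_X_pow']
    by_cases hi : n ≤ i
    · rw [Polynomial.coeff_eq_zero_of_natDegree_lt (lt_of_lt_of_le hn hi), if_pos hi, zero_add]
      exact Submodule.mem_sup_right (Submodule.subset_span ⟨i - n, rfl⟩)
    · rw [if_neg hi, add_zero]
      exact Submodule.mem_sup_left (Submodule.subset_span ⟨i, rfl⟩)
  · apply sup_le
    · rw [Submodule.span_le]
      rintro x ⟨i, rfl⟩
      by_cases hi : n ≤ i
      · rw [Polynomial.coeff_eq_zero_of_natDegree_lt (lt_of_lt_of_le hn hi)]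
        exact Submodule.zero_mem _
      · have : f.coeff i = (f + g * Polynomial.X ^ n).coeff i := by
          rw [Polynomial.coeff_add, Polynomial.coeff_mul_X_pow', if_neg hi, add_zero]
        rw [this]
        exact Submodule.subset_span ⟨i, rfl⟩
    · rw [Submodule.span_le]
      rintro x ⟨j, rfl⟩
      have : g.coeff j = (f + g * Polynomial.X ^ n).coeff (j + n) := by
        rw [Polynomial.coeff_add, Polynomial.coeff_mul_X_pow', if_pos (Nat.le_add_left n j),
          Polynomial.coeff_eq_zero_of_natDegree_lt (lt_of_lt_of_le hn (Nat.le_add_left n j)),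
          zero_add, Nat.add_sub_cancel]
      rw [this]
      exact Submodule.subset_span ⟨j + n, rfl⟩

lemma frac_cancel {C I J : FractionalIdeal (nonZeroDivisors A) K} (hC : C ≠ 0)
    (h : I * C = J * C) : I = J := by
  have h2 := congrArg (fun M => M * C⁻¹) h
  simp only [mul_assoc, mul_inv_cancel₀ hC, mul_one] at h2
  exact h2

lemma frac_cancel_le {C I J : FractionalIdeal (nonZeroDivisors A) K} (hC : C ≠ 0)
    (h : I * C ≤ J * C) : I ≤ J := by
  have h2 := mul_left_mono (a := C⁻¹) h
  simp only [mul_assoc, mul_inv_cancel₀ hC, mul_one] at h2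
  exact h2

lemma ratfunc_cross {x : RatFunc K} {r s : Polynomial K} (hs : s ≠ 0)
    (hx : x = algebraMap (Polynomial K) (RatFunc K) r / algebraMap (Polynomial K) (RatFunc K) s) :
    r * x.denom = s * x.num := by
  apply RatFunc.algebraMap_injective K
  rw [map_mul, map_mul]
  have h1 : algebraMap (Polynomial K) (RatFunc K) r / algebraMap (Polynomial K) (RatFunc K) s =
      algebraMap (Polynomial K) (RatFunc K) x.num / algebraMap (Polynomial K) (RatFunc K) x.denom := by
    rw [RatFunc.num_div_denom, ← hx]
  rw [div_eq_div_iff (RatFunc.algebraMap_ne_zero hs)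
    (RatFunc.algebraMap_ne_zero (RatFunc.denom_ne_zero x))] at h1
  rw [h1]
  ring

/-- content relation for an arbitrary representation -/
lemma content_rep {x : RatFunc K} {r s : Polynomial K} (hs : s ≠ 0)
    (hx : x = algebraMap (Polynomial K) (RatFunc K) r / algebraMap (Polynomial K) (RatFunc K) s)
    {J : Ideal A} (hJ : (J : FractionalIdeal (nonZeroDivisors A) K) * polyContent A x.denom =
      polyContent A x.num) :
    (J : FractionalIdeal (nonZeroDivisors A) K) * polyContent A s = polyContent A r := by
  have hcross := ratfunc_cross hs hx
  have hc : polyContent A r * polyContent A x.denom = polyContent A s * polyContent A x.num := by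
    rw [← polyContent_mul, ← polyContent_mul, hcross]
  have hd : polyContent A x.denom ≠ 0 := polyContent_ne_zero (RatFunc.denom_ne_zero x)
  apply frac_cancel hd
  calc (J : FractionalIdeal (nonZeroDivisors A) K) * polyContent A s * polyContent A x.denom
      = polyContent A s * ((J : FractionalIdeal (nonZeroDivisors A) K) * polyContent A x.denom) := by ring
    _ = polyContent A s * polyContent A x.num := by rw [hJ]
    _ = polyContent A r * polyContent A x.denom := hc.symm

end Main
section Final
variable {A : Type*} [CommRing A] [IsDedekindDomain A] {K : Type*} [Field K]
    [Algebra A K] [IsFractionRing A K]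

/-- content relation transfers between two representations -/
lemma content_rep₂ {x : RatFunc K} {r s r' s' : Polynomial K} (hs : s ≠ 0) (hs' : s' ≠ 0)
    (hx : x = algebraMap (Polynomial K) (RatFunc K) r / algebraMap (Polynomial K) (RatFunc K) s)
    (hx' : x = algebraMap (Polynomial K) (RatFunc K) r' / algebraMap (Polynomial K) (RatFunc K) s')
    {J : Ideal A}
    (hJ : (J : FractionalIdeal (nonZeroDivisors A) K) * polyContent A s = polyContent A r) :
    (J : FractionalIdeal (nonZeroDivisors A) K) * polyContent A s' = polyContent A r' := by
  have hcross : r * s' = r' * s := by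
    apply RatFunc.algebraMap_injective K
    rw [map_mul, map_mul]
    have h1 : algebraMap (Polynomial K) (RatFunc K) r / algebraMap (Polynomial K) (RatFunc K) s =
        algebraMap (Polynomial K) (RatFunc K) r' / algebraMap (Polynomial K) (RatFunc K) s' := by
      rw [← hx, ← hx']
    rw [div_eq_div_iff (RatFunc.algebraMap_ne_zero hs) (RatFunc.algebraMap_ne_zero hs')] at h1
    exact h1
  have hc : polyContent A r * polyContent A s' = polyContent A r' * polyContent A s := by
    rw [← polyContent_mul, ← polyContent_mul, hcross]
  apply frac_cancel (polyContent_ne_zero hs)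
  calc (J : FractionalIdeal (nonZeroDivisors A) K) * polyContent A s' * polyContent A s
      = polyContent A s' * ((J : FractionalIdeal (nonZeroDivisors A) K) * polyContent A s) := by ring
    _ = polyContent A s' * polyContent A r := by rw [hJ]
    _ = polyContent A r' * polyContent A s := by rw [mul_comm]; exact hc

variable (S : Subring (RatFunc K))
variable (hS : ∀ x : RatFunc K, x ∈ S ↔
      ∃ r s : Polynomial K, s ≠ 0 ∧
        x = algebraMap (Polynomial K) (RatFunc K) r / algebraMap (Polynomial K) (RatFunc K) s ∧
        polyContent A r ≤ polyContent A s)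

include hS in
/-- every nonzero element of `S` carries an integral ideal `J` with `J * c(denom) = c(num)` -/
lemma exists_ideal_rep {x : RatFunc K} (hxS : x ∈ S) (hx0 : x ≠ 0) :
    ∃ J : Ideal A, (J : FractionalIdeal (nonZeroDivisors A) K) * polyContent A x.denom =
      polyContent A x.num := by
  obtain ⟨r, s, hs, hx, hcs⟩ := (hS x).mp hxS
  have hr : r ≠ 0 := by
    intro h
    apply hx0
    rw [hx, h, map_zero, zero_div]
  have hcross := ratfunc_cross hs hx
  have hc : polyContent A r * polyContent A x.denom = polyContent A s * polyContent A x.num := by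
    rw [← polyContent_mul, ← polyContent_mul, hcross]
  have hnum_le : polyContent A x.num ≤ polyContent A x.denom := by
    apply frac_cancel_le (polyContent_ne_zero hs)
    calc polyContent A x.num * polyContent A s
        = polyContent A s * polyContent A x.num := mul_comm _ _
      _ = polyContent A r * polyContent A x.denom := hc.symm
      _ ≤ polyContent A s * polyContent A x.denom := mul_left_mono hcs
      _ = polyContent A x.denom * polyContent A s := mul_comm _ _
  have hd0 : polyContent A x.denom ≠ 0 := polyContent_ne_zero (RatFunc.denom_ne_zero x)
  have h1 : polyContent A x.num * (polyContent A x.denom)⁻¹ ≤ 1 := by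
    have := mul_left_mono (a := (polyContent A x.denom)⁻¹) hnum_le
    simpa [mul_inv_cancel₀ hd0] using this
  obtain ⟨J, hJ⟩ := FractionalIdeal.le_one_iff_exists_coeIdeal.mp h1
  refine ⟨J, ?_⟩
  rw [hJ, mul_assoc, mul_comm (polyContent A x.denom)⁻¹, mul_inv_cancel₀ hd0,
    mul_one]

include hS in
/-- divisibility criterion in `S` -/
lemma dvd_in_S {x y : RatFunc K} (hx0 : x ≠ 0)
    (h : polyContent A y.num * polyContent A x.denom ≤
      polyContent A x.num * polyContent A y.denom) :
    ∃ z : RatFunc K, z ∈ S ∧ y = x * z := by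
  have hxden := RatFunc.algebraMap_ne_zero (RatFunc.denom_ne_zero x)
  have hyden := RatFunc.algebraMap_ne_zero (RatFunc.denom_ne_zero y)
  have hxnum := RatFunc.algebraMap_ne_zero (RatFunc.num_ne_zero hx0)
  set z := algebraMap (Polynomial K) (RatFunc K) (y.num * x.denom) /
    algebraMap (Polynomial K) (RatFunc K) (x.num * y.denom) with hz
  have hzS : z ∈ S := by
    rw [hS]
    refine ⟨y.num * x.denom, x.num * y.denom,
      mul_ne_zero (RatFunc.num_ne_zero hx0) (RatFunc.denom_ne_zero y), rfl, ?_⟩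
    rw [polyContent_mul, polyContent_mul]
    exact h
  have hx1 : x * algebraMap (Polynomial K) (RatFunc K) x.denom =
      algebraMap (Polynomial K) (RatFunc K) x.num := by
    have h' := div_mul_cancel₀ (algebraMap (Polynomial K) (RatFunc K) x.num) hxden
    rwa [RatFunc.num_div_denom] at h'
  have hy1 : y * algebraMap (Polynomial K) (RatFunc K) y.denom =
      algebraMap (Polynomial K) (RatFunc K) y.num := by
    have h' := div_mul_cancel₀ (algebraMap (Polynomial K) (RatFunc K) y.num) hyden
    rwa [RatFunc.num_div_denom] at h'
  refine ⟨z, hzS, ?_⟩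
  rw [hz, ← mul_div_assoc, eq_div_iff (RatFunc.algebraMap_ne_zero
    (mul_ne_zero (RatFunc.num_ne_zero hx0) (RatFunc.denom_ne_zero y)))]
  rw [map_mul, map_mul]
  calc y * (algebraMap (Polynomial K) (RatFunc K) x.num *
        algebraMap (Polynomial K) (RatFunc K) y.denom)
      = (y * algebraMap (Polynomial K) (RatFunc K) y.denom) *
        algebraMap (Polynomial K) (RatFunc K) x.num := by ring
    _ = algebraMap (Polynomial K) (RatFunc K) y.num *
        algebraMap (Polynomial K) (RatFunc K) x.num := by rw [hy1]
    _ = (x * algebraMap (Polynomial K) (RatFunc K) x.denom) *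
        algebraMap (Polynomial K) (RatFunc K) y.num := by rw [hx1]; ring
    _ = x * (algebraMap (Polynomial K) (RatFunc K) y.num *
        algebraMap (Polynomial K) (RatFunc K) x.denom) := by ring

include hS in
theorem S_pid : IsPrincipalIdealRing S := by
  classical
  constructor
  intro I
  by_cases hI : I = ⊥
  · exact ⟨⟨0, by rw [hI]; exact (Ideal.span_singleton_eq_bot.mpr rfl).symm⟩⟩
  obtain ⟨x₁, hx₁I, hx₁0⟩ := Submodule.exists_mem_ne_zero_of_ne_bot hI
  -- the set of "value ideals" of nonzero elements of I
  set Ω : Set (Ideal A) := {J : Ideal A | ∃ x : S, x ∈ I ∧ (x : RatFunc K) ≠ 0 ∧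
    (J : FractionalIdeal (nonZeroDivisors A) K) * polyContent A ((x : RatFunc K)).denom =
      polyContent A ((x : RatFunc K)).num} with hΩ
  have hΩne : Ω.Nonempty := by
    have hx₁R : (x₁ : RatFunc K) ≠ 0 := by
      simpa using hx₁0
    obtain ⟨J, hJ⟩ := exists_ideal_rep S hS x₁.2 hx₁R
    exact ⟨J, x₁, hx₁I, hx₁R, hJ⟩
  obtain ⟨J₀, hJ₀Ω, hJ₀max⟩ := (set_has_maximal_iff_noetherian.mpr inferInstance) Ω hΩne
  obtain ⟨x₀, hx₀I, hx₀0, hJ₀⟩ := hJ₀Ω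
  refine ⟨⟨x₀, le_antisymm ?_ ?_⟩⟩
  swap
  · rw [Submodule.span_le, Set.singleton_subset_iff]
    exact hx₀I
  intro y hyI
  by_cases hy0 : (y : RatFunc K) = 0
  · have : y = 0 := by
      ext
      simpa using hy0
    rw [this]
    exact Submodule.zero_mem _
  obtain ⟨Jy, hJy⟩ := exists_ideal_rep S hS y.2 hy0
  set xR : RatFunc K := (x₀ : RatFunc K) with hxR
  set yR : RatFunc K := (y : RatFunc K) with hyR
  set F : Polynomial K := xR.num * yR.denom with hF
  set G : Polynomial K := yR.num * xR.denom with hG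
  set H : Polynomial K := xR.denom * yR.denom with hH
  set n : ℕ := F.natDegree + 1 with hn
  set N : Polynomial K := F + G * Polynomial.X ^ n with hN
  have hF0 : F ≠ 0 := mul_ne_zero (RatFunc.num_ne_zero hx₀0) (RatFunc.denom_ne_zero _)
  have hG0 : G ≠ 0 := mul_ne_zero (RatFunc.num_ne_zero hy0) (RatFunc.denom_ne_zero _)
  have hH0 : H ≠ 0 := mul_ne_zero (RatFunc.denom_ne_zero _) (RatFunc.denom_ne_zero _)
  have hN0 : N ≠ 0 := by
    intro h
    have hGX : G * Polynomial.X ^ n ≠ 0 := mul_ne_zero hG0 (pow_ne_zero _ Polynomial.X_ne_zero)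
    have hFeq : F = -(G * Polynomial.X ^ n) := by
      rw [eq_neg_iff_add_eq_zero]
      exact h
    have hdeg : F.natDegree = G.natDegree + n := by
      rw [hFeq, Polynomial.natDegree_neg, Polynomial.natDegree_mul hG0
        (pow_ne_zero _ Polynomial.X_ne_zero), Polynomial.natDegree_X_pow]
    omega
  have hcN : polyContent A N = polyContent A F ⊔ polyContent A G :=
    polyContent_add_mul_X_pow F G (Nat.lt_succ_self _)
  -- X^n is in S
  have hXn : algebraMap (Polynomial K) (RatFunc K) (Polynomial.X ^ n) ∈ S := by
    rw [hS]
    refine ⟨Polynomial.X ^ n, 1, one_ne_zero, by rw [map_one, div_one], ?_⟩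
    rw [polyContent_X_pow]
    have h1 : polyContent A (1 : Polynomial K) = 1 := by
      have := polyContent_X_pow (A := A) (K := K) 0
      rwa [pow_zero] at this
    rw [h1]
  set ξ : S := ⟨algebraMap (Polynomial K) (RatFunc K) (Polynomial.X ^ n), hXn⟩ with hξ
  set z : S := x₀ + ξ * y with hzdef
  have hzI : z ∈ I := I.add_mem hx₀I (I.mul_mem_left ξ hyI)
  have hzR : (z : RatFunc K) = xR + algebraMap (Polynomial K) (RatFunc K) (Polynomial.X ^ n) * yR := by
    rw [hzdef]
    push_cast
    simp [ξ, xR, yR]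
  -- z = N / H
  have hx1 : xR * algebraMap (Polynomial K) (RatFunc K) xR.denom =
      algebraMap (Polynomial K) (RatFunc K) xR.num := by
    have h := div_mul_cancel₀ (algebraMap (Polynomial K) (RatFunc K) xR.num)
      (RatFunc.algebraMap_ne_zero (RatFunc.denom_ne_zero xR))
    rwa [RatFunc.num_div_denom] at h
  have hy1 : yR * algebraMap (Polynomial K) (RatFunc K) yR.denom =
      algebraMap (Polynomial K) (RatFunc K) yR.num := by
    have h := div_mul_cancel₀ (algebraMap (Polynomial K) (RatFunc K) yR.num)
      (RatFunc.algebraMap_ne_zero (RatFunc.denom_ne_zero yR))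
    rwa [RatFunc.num_div_denom] at h
  have hzrep : (z : RatFunc K) = algebraMap (Polynomial K) (RatFunc K) N /
      algebraMap (Polynomial K) (RatFunc K) H := by
    rw [eq_div_iff (RatFunc.algebraMap_ne_zero hH0), hzR, hH, hN, hF, hG]
    simp only [map_mul, map_add]
    calc (xR + algebraMap (Polynomial K) (RatFunc K) (Polynomial.X ^ n) * yR) *
        (algebraMap (Polynomial K) (RatFunc K) xR.denom *
          algebraMap (Polynomial K) (RatFunc K) yR.denom)
        = (xR * algebraMap (Polynomial K) (RatFunc K) xR.denom) *
            algebraMap (Polynomial K) (RatFunc K) yR.denom +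
          (yR * algebraMap (Polynomial K) (RatFunc K) yR.denom) *
            algebraMap (Polynomial K) (RatFunc K) xR.denom *
            algebraMap (Polynomial K) (RatFunc K) (Polynomial.X ^ n) := by ring
      _ = _ := by rw [hx1, hy1]
  have hz0 : (z : RatFunc K) ≠ 0 := by
    rw [hzrep]
    exact div_ne_zero (RatFunc.algebraMap_ne_zero hN0) (RatFunc.algebraMap_ne_zero hH0)
  -- contents
  have hcF : polyContent A F = (J₀ : FractionalIdeal (nonZeroDivisors A) K) * polyContent A H := by
    rw [hF, hH, polyContent_mul, polyContent_mul, ← hJ₀]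
    ring
  have hcG : polyContent A G = (Jy : FractionalIdeal (nonZeroDivisors A) K) * polyContent A H := by
    rw [hG, hH, polyContent_mul, polyContent_mul, ← hJy]
    ring
  have hcH0 : polyContent A H ≠ 0 := polyContent_ne_zero hH0
  have hcN_le : polyContent A N ≤ polyContent A H := by
    rw [hcN]
    apply sup_le
    · rw [hcF]
      calc (J₀ : FractionalIdeal (nonZeroDivisors A) K) * polyContent A H
          ≤ 1 * polyContent A H := mul_left_mono FractionalIdeal.coeIdeal_le_one
        _ = polyContent A H := one_mul _
    · rw [hcG]
      calc (Jy : FractionalIdeal (nonZeroDivisors A) K) * polyContent A H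
          ≤ 1 * polyContent A H := mul_left_mono FractionalIdeal.coeIdeal_le_one
        _ = polyContent A H := one_mul _
  -- the ideal of z
  have h1 : polyContent A N * (polyContent A H)⁻¹ ≤ 1 := by
    have := mul_left_mono (a := (polyContent A H)⁻¹) hcN_le
    simpa [mul_inv_cancel₀ hcH0] using this
  obtain ⟨JN, hJN⟩ := FractionalIdeal.le_one_iff_exists_coeIdeal.mp h1
  have hJNprop : (JN : FractionalIdeal (nonZeroDivisors A) K) * polyContent A H =
      polyContent A N := by
    rw [hJN, mul_assoc, mul_comm (polyContent A H)⁻¹, mul_inv_cancel₀ hcH0,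
      mul_one]
  have hJNmem : JN ∈ Ω := by
    refine ⟨z, hzI, hz0, ?_⟩
    exact content_rep₂ hH0 (RatFunc.denom_ne_zero _) hzrep
      (RatFunc.num_div_denom (z : RatFunc K)).symm hJNprop
  -- J₀ ≤ JN hence equal by maximality
  have hle : J₀ ≤ JN := by
    rw [← FractionalIdeal.coeIdeal_le_coeIdeal K]
    apply frac_cancel_le hcH0
    rw [hJNprop, ← hcF, hcN]
    exact le_sup_left
  have heq : J₀ = JN := by
    by_contra hne
    exact hJ₀max JN hJNmem (lt_of_le_of_ne hle hne)
  -- conclude : c(num y) * c(denom x₀) ≤ c(num x₀) * c(denom y)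
  have hfinal : polyContent A yR.num * polyContent A xR.denom ≤
      polyContent A xR.num * polyContent A yR.denom := by
    calc polyContent A yR.num * polyContent A xR.denom
        = polyContent A G := (polyContent_mul _ _).symm
      _ ≤ polyContent A N := by rw [hcN]; exact le_sup_right
      _ = (JN : FractionalIdeal (nonZeroDivisors A) K) * polyContent A H := hJNprop.symm
      _ = (J₀ : FractionalIdeal (nonZeroDivisors A) K) * polyContent A H := by rw [heq]
      _ = polyContent A F := hcF.symm
      _ = polyContent A xR.num * polyContent A yR.denom := polyContent_mul _ _
  obtain ⟨w, hwS, hw⟩ := dvd_in_S S hS hx₀0 hfinal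
  rw [Submodule.mem_span_singleton]
  refine ⟨⟨w, hwS⟩, ?_⟩
  rw [smul_eq_mul]
  ext
  push_cast
  rw [mul_comm]
  exact hw.symm

end Final

/-- The Kronecker function ring R(w) = {0} ∪ {r/s : c(r) ⊆ c(s)} of a Dedekind domain A
is a principal ideal domain. -/
theorem stmt_16 {A : Type*} [CommRing A] [IsDedekindDomain A] {K : Type*} [Field K]
    [Algebra A K] [IsFractionRing A K]
    (S : Subring (RatFunc K))
    (hS : ∀ x : RatFunc K, x ∈ S ↔
      ∃ r s : Polynomial K, s ≠ 0 ∧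
        x = algebraMap (Polynomial K) (RatFunc K) r / algebraMap (Polynomial K) (RatFunc K) s ∧
        polyContent A r ≤ polyContent A s) :
    IsPrincipalIdealRing S := by
  exact S_pid S hS
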